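/- Let C be a cartesian category and let g : X ⟶ Y and f : Y ⟶ Z be composable morphisms of C. If g is a split epimorphism and f is an effective descent morphism, then the composite f ∘ g is an effective descent morphism. -/

import Mathlib

open CategoryTheory Limits

universe v₁ v₂ v₃ u₁ u₂ u₃

/-- A morphism `f : X ⟶ Y` of a cartesian category is an effective descent morphism if the
pullback functor `f* : C/Y ⥤ C/X` is monadic. -/
def EffectiveDescentMorphism {C : Type u₁} [Category.{v₁} C] [HasFiniteLimits C]
    {X Y : C} (f : X ⟶ Y) : Prop :=
  Nonempty (MonadicRightAdjoint (Over.pullback f))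

section Aux

variable {C₀ : Type u₂} [Category.{v₂} C₀] {D₀ : Type u₃} [Category.{v₃} D₀]

/-- Transport a split coequalizer of images along a natural isomorphism of functors. -/
def isSplitCoequalizerOfNatIso {H K : C₀ ⥤ D₀} (α : H ≅ K) {A B : C₀} {u v : A ⟶ B}
    {W : D₀} {π : H.obj B ⟶ W} (q : IsSplitCoequalizer (H.map u) (H.map v) π) :
    IsSplitCoequalizer (K.map u) (K.map v) (α.inv.app B ≫ π) where
  rightSection := q.rightSection ≫ α.hom.app B
  leftSection := α.inv.app B ≫ q.leftSection ≫ α.hom.app A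
  condition := by
    rw [α.inv.naturality_assoc u, α.inv.naturality_assoc v, q.condition]
  rightSection_π := by
    rw [Category.assoc, Iso.hom_inv_id_app_assoc, q.rightSection_π]
  leftSection_bottom := by
    rw [Category.assoc, Category.assoc, ← α.hom.naturality v, q.leftSection_bottom_assoc,
      Iso.inv_hom_id_app]
  leftSection_top := by
    rw [Category.assoc, Category.assoc, ← α.hom.naturality u, q.leftSection_top_assoc, Category.assoc]

end Aux

/-- If `g` is a split epimorphism and `f` is an effective descent morphism then the composite
`f ∘ g` is an effective descent morphism. -/
theorem effectiveDescentMorphism_comp_of_isSplitEpi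
    {C : Type u₁} [Category.{v₁} C] [HasFiniteLimits C]
    {X Y Z : C} (g : X ⟶ Y) (f : Y ⟶ Z)
    (hg : IsSplitEpi g) (hf : EffectiveDescentMorphism f) :
    EffectiveDescentMorphism (g ≫ f) := by
  obtain ⟨⟨s, hs⟩⟩ := hg
  obtain ⟨M⟩ := hf
  set G : Over Z ⥤ Over X := Over.pullback (g ≫ f) with hG
  -- the composite pullback functor, isomorphic to `G`
  set G' : Over Z ⥤ Over X := Over.pullback f ⋙ Over.pullback g with hG'
  have iso0 : G ≅ G' := Over.pullbackComp g f
  -- pulling back along `g` and then along the section `s` is the identity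
  have iso1 : Over.pullback g ⋙ Over.pullback s ≅ 𝟭 (Over Y) :=
    (Over.pullbackComp s g).symm ≪≫ eqToIso (by simp only [hs]) ≪≫ Over.pullbackId
  have isoF : G ⋙ Over.pullback s ≅ Over.pullback f :=
    Functor.isoWhiskerRight iso0 (Over.pullback s) ≪≫ Functor.associator _ _ _ ≪≫
      Functor.isoWhiskerLeft (Over.pullback f) iso1 ≪≫ (Over.pullback f).rightUnitor
  -- `G` reflects isomorphisms
  haveI : (Over.pullback f).ReflectsIsomorphisms := by
    constructor
    intro A B α h
    have h2 : IsIso ((Monad.comparison M.adj ⋙ M.adj.toMonad.forget).map α) := by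
      rw [NatIso.isIso_map_iff (Monad.comparisonForget M.adj) α]; exact h
    exact isIso_of_reflects_iso α (Monad.comparison M.adj ⋙ M.adj.toMonad.forget)
  haveI : G.ReflectsIsomorphisms := by
    constructor
    intro A B α h
    have h1 : IsIso ((G ⋙ Over.pullback s).map α) := inferInstanceAs (IsIso ((Over.pullback s).map (G.map α)))
    have h2 : IsIso ((Over.pullback f).map α) := by
      rw [← NatIso.isIso_map_iff isoF α]; exact h1
    exact isIso_of_reflects_iso α (Over.pullback f)
  -- the key constructions for a `G`-split pair
  have key : ∀ {A B : Over Z} (u v : A ⟶ B) [G.IsSplitPair u v],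
      HasColimit (parallelPair u v) ∧ PreservesColimit (parallelPair u v) G := by
    intro A B u v hpair
    obtain ⟨W, π, ⟨q0⟩⟩ := hpair.splittable
    -- transport the split coequalizer along `s*` to get an `f*`-split coequalizer
    have q1 : IsSplitCoequalizer ((G ⋙ Over.pullback s).map u) ((G ⋙ Over.pullback s).map v)
        ((Over.pullback s).map π) := q0.map (Over.pullback s)
    have q2 : IsSplitCoequalizer ((Over.pullback f).map u) ((Over.pullback f).map v)
        (isoF.inv.app B ≫ (Over.pullback s).map π) := isSplitCoequalizerOfNatIso isoF q1
    -- hence `u, v` is an `f*`-split pair, and `f*` creates its coequalizer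
    haveI : (Over.pullback f).IsSplitPair u v := ⟨⟨_, _, ⟨q2⟩⟩⟩
    haveI : CreatesColimit (parallelPair u v) (Over.pullback f) :=
      Monad.createsGSplitCoequalizersOfMonadic (Over.pullback f) u v
    let e : parallelPair u v ⋙ Over.pullback f ≅
        parallelPair ((Over.pullback f).map u) ((Over.pullback f).map v) :=
      diagramIsoParallelPair _
    have hQ : IsColimit ((Cocone.precompose e.hom).obj q2.asCofork) :=
      (IsColimit.precomposeHomEquiv e _).symm q2.isCoequalizer
    -- lift the colimit along `f*`
    let c₀ : Cocone (parallelPair u v) := liftColimit hQ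
    have hc₀ : IsColimit c₀ := liftedColimitIsColimit hQ
    have hmap : (Over.pullback f).mapCocone c₀ ≅ (Cocone.precompose e.hom).obj q2.asCofork :=
      liftedColimitMapsToOriginal hQ
    refine ⟨⟨⟨c₀, hc₀⟩⟩, ?_⟩
    -- `G` preserves this colimit
    have q3 : IsSplitCoequalizer ((Over.pullback g).map ((Over.pullback f).map u))
        ((Over.pullback g).map ((Over.pullback f).map v))
        ((Over.pullback g).map (isoF.inv.app B ≫ (Over.pullback s).map π)) :=
      q2.map (Over.pullback g)
    let e' : (parallelPair u v ⋙ Over.pullback f) ⋙ Over.pullback g ≅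
        parallelPair ((Over.pullback g).map ((Over.pullback f).map u))
          ((Over.pullback g).map ((Over.pullback f).map v)) := diagramIsoParallelPair _
    have hq3 : IsColimit ((Cocone.precompose e'.hom).obj q3.asCofork) :=
      (IsColimit.precomposeHomEquiv e' _).symm q3.isCoequalizer
    -- identify this colimit cocone with `g*` applied to the lifted cocone
    have hiso2 : (Cocone.precompose e'.hom).obj q3.asCofork ≅
        (Over.pullback g).mapCocone ((Cocone.precompose e.hom).obj q2.asCofork) := by
      refine Cocones.ext (Iso.refl _) ?_
      rintro (_ | _) <;>
        simp [e, e', diagramIsoParallelPair_hom_app, Cofork.ofπ, ← Functor.map_comp,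
          isoF.inv.naturality_assoc]
      · erw [Category.comp_id]; exact ((Over.pullback g).map_comp _ _).symm
      · erw [Category.comp_id]; exact (Category.id_comp _).trans (congrArg _ (Category.id_comp _).symm)
    have hGQ : IsColimit ((Over.pullback g).mapCocone ((Over.pullback f).mapCocone c₀)) := by
      refine IsColimit.ofIsoColimit hq3 (hiso2 ≪≫ ?_)
      exact (Cocones.functoriality _ (Over.pullback g)).mapIso hmap.symm
    have : PreservesColimit (parallelPair u v) G' :=
      preservesColimit_of_preserves_colimit_cocone hc₀ hGQ
    exact preservesColimit_of_natIso (parallelPair u v) iso0.symm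
  haveI : Monad.HasCoequalizerOfIsSplitPair G := ⟨fun u v _ => by
    have := (key u v).1
    exact hasColimit_of_iso (diagramIsoParallelPair (parallelPair u v)).symm⟩
  haveI : Monad.PreservesColimitOfIsSplitPair G := ⟨fun u v _ => (key u v).2⟩
  exact ⟨Monad.monadicOfHasPreservesGSplitCoequalizersOfReflectsIsomorphisms
    (Over.mapPullbackAdj (g ≫ f))⟩
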